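/- Graphs compositionality of sum-out: let φ₁ over 𝐗₁ = 𝐘₁ ⊎ 𝐖₁ and φ₂ over 𝐗₂ = 𝐘₂ ⊎ 𝐖₂ be factors, with 𝐖₁ ∩ 𝐗₂ = ∅ and 𝐖₂ ∩ 𝐗₁ = ∅, and let Δ ⊆ 𝐘₁ ∪ 𝐘₂. Setting 𝐙 = (𝐘₁ ∪ 𝐘₂) \ Δ, we have ∑_{(𝐗₁ ∪ 𝐗₂) \ Δ} (φ₁ ⊙ φ₂) = ∑_𝐙 ((∑_{𝐖₁} φ₁) ⊙ (∑_{𝐖₂} φ₂)). -/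
import Mathlib


open Finset

/-- A factor over a set `S` of variables: a function on total instantiations
that only depends on the values of the variables in `S`. -/
def FDependsOn {V : Type*} {Val : V → Type*}
    (φ : (∀ v, Val v) → NNReal) (S : Finset V) : Prop :=
  ∀ a b : ∀ v, Val v, (∀ v ∈ S, a v = b v) → φ a = φ b

/-- Summing out the variables in `Z` from a factor. -/
def fsumOut {V : Type*} [DecidableEq V] {Val : V → Type*} [∀ v, Fintype (Val v)]
    (Z : Finset V) (φ : (∀ v, Val v) → NNReal) : (∀ v, Val v) → NNReal :=
  fun a => ∑ z : (∀ v : Z, Val v), φ (fun v => if h : v ∈ Z then z ⟨v, h⟩ else a v)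


section Aux
variable {V : Type*} [DecidableEq V] {Val : V → Type*} [∀ v, Fintype (Val v)]

lemma fsumOut_eq (Z : Finset V) (φ : (∀ v, Val v) → NNReal) (a : ∀ v, Val v) :
    fsumOut Z φ a = ∑ z : (∀ v : Z, Val v), φ (Function.updateFinset a Z z) := rfl

lemma fsumOut_union {A B : Finset V} (h : Disjoint A B) (φ : (∀ v, Val v) → NNReal) :
    fsumOut (A ∪ B) φ = fsumOut A (fsumOut B φ) := by
  funext a
  simp only [fsumOut_eq]
  rw [← Equiv.sum_comp (Equiv.piFinsetUnion Val h), Fintype.sum_prod_type]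
  refine Finset.sum_congr rfl fun x _ => Finset.sum_congr rfl fun y _ => ?_
  rw [Function.updateFinset_updateFinset h]

lemma fdependsOn_fsumOut {W S : Finset V} {φ : (∀ v, Val v) → NNReal}
    (h : FDependsOn φ (S ∪ W)) : FDependsOn (fsumOut W φ) S := by
  intro a b hab
  refine Finset.sum_congr rfl fun z _ => h _ _ fun v hv => ?_
  by_cases hw : v ∈ W
  · simp [hw]
  · have : v ∈ S := by
      rcases Finset.mem_union.mp hv with h' | h'
      · exact h'
      · exact absurd h' hw
    simp [hw, hab v this]

lemma fsumOut_mul_left {Z S : Finset V} {φ ψ : (∀ v, Val v) → NNReal}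
    (hφ : FDependsOn φ S) (hZS : Disjoint Z S) :
    fsumOut Z (fun a => φ a * ψ a) = fun a => φ a * fsumOut Z ψ a := by
  funext a
  simp only [fsumOut_eq]
  rw [Finset.mul_sum]
  refine Finset.sum_congr rfl fun z _ => ?_
  congr 1
  refine hφ _ _ fun v hv => ?_
  have : v ∉ Z := fun hz => (Finset.disjoint_left.mp hZS hz) hv
  simp [Function.updateFinset, this]

lemma fsumOut_mul_right {Z S : Finset V} {φ ψ : (∀ v, Val v) → NNReal}
    (hφ : FDependsOn φ S) (hZS : Disjoint Z S) :
    fsumOut Z (fun a => ψ a * φ a) = fun a => fsumOut Z ψ a * φ a := by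
  rw [show (fun a => ψ a * φ a) = (fun a => φ a * ψ a) from funext fun a => mul_comm _ _,
    fsumOut_mul_left hφ hZS]
  exact funext fun a => mul_comm _ _

end Aux


/-- Graphs compositionality of sum-out. -/
theorem graphs_compositionality {V : Type*} [DecidableEq V] {Val : V → Type*}
    [∀ v, Fintype (Val v)] (Y₁ W₁ Y₂ W₂ Δ : Finset V)
    (φ₁ φ₂ : (∀ v, Val v) → NNReal)
    (h₁ : FDependsOn φ₁ (Y₁ ∪ W₁)) (h₂ : FDependsOn φ₂ (Y₂ ∪ W₂))
    (hd₁ : Disjoint Y₁ W₁) (hd₂ : Disjoint Y₂ W₂)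
    (hW₁ : Disjoint W₁ (Y₂ ∪ W₂)) (hW₂ : Disjoint W₂ (Y₁ ∪ W₁))
    (hΔ : Δ ⊆ Y₁ ∪ Y₂) :
    fsumOut (((Y₁ ∪ W₁) ∪ (Y₂ ∪ W₂)) \ Δ) (fun a => φ₁ a * φ₂ a)
      = fsumOut ((Y₁ ∪ Y₂) \ Δ)
          (fun a => fsumOut W₁ φ₁ a * fsumOut W₂ φ₂ a) := by

  have hW₁Y₂ : Disjoint W₁ Y₂ := hW₁.mono_right Finset.subset_union_left
  have hW₁W₂ : Disjoint W₁ W₂ := hW₁.mono_right Finset.subset_union_right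
  have hW₂Y₁ : Disjoint W₂ Y₁ := hW₂.mono_right Finset.subset_union_left
  have hW₁Δ : Disjoint W₁ Δ := Disjoint.mono_right hΔ (by
    rw [Finset.disjoint_union_right]; exact ⟨hd₁.symm, hW₁Y₂⟩)
  have hW₂Δ : Disjoint W₂ Δ := Disjoint.mono_right hΔ (by
    rw [Finset.disjoint_union_right]; exact ⟨hW₂Y₁, hd₂.symm⟩)
  have hset : ((Y₁ ∪ W₁) ∪ (Y₂ ∪ W₂)) \ Δ = ((Y₁ ∪ Y₂) \ Δ) ∪ (W₁ ∪ W₂) := by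
    ext v
    simp only [Finset.mem_sdiff, Finset.mem_union]
    constructor
    · rintro ⟨h, hv⟩
      rcases h with (h | h) | (h | h)
      · exact Or.inl ⟨Or.inl h, hv⟩
      · exact Or.inr (Or.inl h)
      · exact Or.inl ⟨Or.inr h, hv⟩
      · exact Or.inr (Or.inr h)
    · rintro (⟨h | h, hv⟩ | h | h)
      · exact ⟨Or.inl (Or.inl h), hv⟩
      · exact ⟨Or.inr (Or.inl h), hv⟩
      · exact ⟨Or.inl (Or.inr h), Finset.disjoint_left.mp hW₁Δ h⟩
      · exact ⟨Or.inr (Or.inr h), Finset.disjoint_left.mp hW₂Δ h⟩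
  have hdZ : Disjoint ((Y₁ ∪ Y₂) \ Δ) (W₁ ∪ W₂) := by
    rw [Finset.disjoint_union_right]
    constructor
    · refine Disjoint.mono_left Finset.sdiff_subset ?_
      rw [Finset.disjoint_union_left]; exact ⟨hd₁, hW₁Y₂.symm⟩
    · refine Disjoint.mono_left Finset.sdiff_subset ?_
      rw [Finset.disjoint_union_left]; exact ⟨hW₂Y₁.symm, hd₂⟩
  have step1 : fsumOut W₂ (fun a => φ₁ a * φ₂ a) = fun a => φ₁ a * fsumOut W₂ φ₂ a :=
    fsumOut_mul_left h₁ hW₂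
  have hg : FDependsOn (fsumOut W₂ φ₂) Y₂ := fdependsOn_fsumOut h₂
  have inner : fsumOut W₁ (fsumOut W₂ (fun a => φ₁ a * φ₂ a))
      = fun a => fsumOut W₁ φ₁ a * fsumOut W₂ φ₂ a := by
    rw [step1]; exact fsumOut_mul_right hg hW₁Y₂
  rw [hset, fsumOut_union hdZ, fsumOut_union hW₁W₂, inner]
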